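/- Let T : X → X be a bounded linear operator on an infinite dimensional Banach space with C ⊆ O(x,T,d) for an open cone C and d > 0. Then T has dense range, and every power T^n has dense range. -/

import Mathlib

open Filter Topology

variable {X : Type*} [NormedAddCommGroup X] [NormedSpace ℂ X]

/-- The orbit of `x` under `T`. -/
def orbitSet (T : X →L[ℂ] X) (x : X) : Set X := Set.range fun n : ℕ => (T ^ n) x

/-- The coarse orbit of `x` under `T` with respect to `d`. -/
def coarseOrbit (T : X →L[ℂ] X) (x : X) (d : ℝ) : Set X :=
  {y | ∃ n : ℕ, ‖(T ^ n) x - y‖ < d}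

/-- The extended (prolongational) limit set `J(x,T)`. -/
def jSet (T : X →L[ℂ] X) (x : X) : Set X :=
  {y | ∃ k : ℕ → ℕ, StrictMono k ∧ (∀ n, 0 < k n) ∧
    ∃ u : ℕ → X, Tendsto u atTop (𝓝 x) ∧
      Tendsto (fun n => (T ^ k n) (u n)) atTop (𝓝 y)}

/-- The coarse extended limit set `J(x,T,d)`. -/
def jCoarse (T : X →L[ℂ] X) (x : X) (d : ℝ) : Set X :=
  {y | ∃ k : ℕ → ℕ, StrictMono k ∧ (∀ n, 0 < k n) ∧
    ∃ u : ℕ → X, Tendsto u atTop (𝓝 x) ∧ ∀ n, ‖(T ^ k n) (u n) - y‖ < d}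

/-- The extended mixing limit set `J^{mix}(x,T)`. -/
def jMix (T : X →L[ℂ] X) (x : X) : Set X :=
  {y | ∃ u : ℕ → X, Tendsto u atTop (𝓝 x) ∧
    Tendsto (fun n => (T ^ n) (u n)) atTop (𝓝 y)}

/-- The coarse extended mixing limit set `J^{mix}(x,T,d)`. -/
def jMixCoarse (T : X →L[ℂ] X) (x : X) (d : ℝ) : Set X :=
  {y | ∃ u : ℕ → X, Tendsto u atTop (𝓝 x) ∧ ∀ n, ‖(T ^ n) (u n) - y‖ < d}

/-- The prolongation `D(x,T) = O(x,T) ∪ J(x,T)`. -/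
def dSet (T : X →L[ℂ] X) (x : X) : Set X := orbitSet T x ∪ jSet T x

/-- The coarse prolongation `D(x,T,d) = O(x,T,d) ∪ J(x,T,d)`. -/
def dCoarse (T : X →L[ℂ] X) (x : X) (d : ℝ) : Set X :=
  coarseOrbit T x d ∪ jCoarse T x d

/-- The coarse mixing prolongation `D^{mix}(x,T,d)`. -/
def dMixCoarse (T : X →L[ℂ] X) (x : X) (d : ℝ) : Set X :=
  coarseOrbit T x d ∪ jMixCoarse T x d

/-- An open cone: a nonempty open set invariant under positive scalar multiplication. -/
def IsOpenCone (C : Set X) : Prop :=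
  IsOpen C ∧ C.Nonempty ∧ ∀ x ∈ C, ∀ r : ℝ, 0 < r → (r : ℂ) • x ∈ C


private lemma key_denseRange {X : Type*} [NormedAddCommGroup X] [NormedSpace ℂ X]
    (T : X →L[ℂ] X) (x : X) (d : ℝ) (hd : 0 < d)
    (C : Set X) (hC : IsOpenCone C) (hdense : C ⊆ coarseOrbit T x d)
    (n : ℕ) : DenseRange (T ^ n) := by
  obtain ⟨hCopen, hCne, hCcone⟩ := hC
  set M : Submodule ℂ X := LinearMap.range ((T ^ n : X →L[ℂ] X) : X →ₗ[ℂ] X) with hM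
  set N : Submodule ℂ X := M.topologicalClosure with hN
  have hNclosed : IsClosed (N : Set X) := Submodule.isClosed_topologicalClosure M
  have hNcoe : (N : Set X) = closure (Set.range ⇑(T ^ n)) := by
    have hMcoe : (M : Set X) = Set.range ⇑(T ^ n) := by
      ext y; exact ⟨fun ⟨z, hz⟩ => ⟨z, hz⟩, fun ⟨z, hz⟩ => ⟨z, hz⟩⟩
    rw [hN, Submodule.topologicalClosure_coe, hMcoe]
  -- it suffices to show C ⊆ N
  suffices hsub : C ⊆ (N : Set X) by
    have hNtop : N = ⊤ := by
      apply Submodule.eq_top_of_nonempty_interior' (R := ℂ)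
      obtain ⟨c, hc⟩ := hCne
      exact ⟨c, mem_interior_iff_mem_nhds.2 (Filter.mem_of_superset (hCopen.mem_nhds hc) hsub)⟩
    rw [DenseRange, dense_iff_closure_eq, ← hNcoe, hNtop]
    rfl
  by_contra hsub
  obtain ⟨c, hcC, hcN⟩ := Set.not_subset.1 hsub
  have hNne : (N : Set X).Nonempty := ⟨0, N.zero_mem⟩
  have hδ : 0 < Metric.infDist c (N : Set X) :=
    (hNclosed.notMem_iff_infDist_pos hNne).1 hcN
  set δ := Metric.infDist c (N : Set X) with hδdef
  have hc0 : c ≠ 0 := by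
    rintro rfl; exact hcN (N.zero_mem)
  have hcnorm : (0:ℝ) < ‖c‖ := norm_pos_iff.2 hc0
  -- bound on early orbit points
  set K : ℝ := (max 1 ‖T‖) ^ n * ‖x‖ with hK
  have hpow : ∀ m : ℕ, ‖T ^ m‖ ≤ (max 1 ‖T‖) ^ m := by
    intro m
    induction m with
    | zero => simpa using (show ‖(1 : X →L[ℂ] X)‖ ≤ 1 from ContinuousLinearMap.norm_id_le)
    | succ k ih =>
        calc ‖T ^ (k + 1)‖ = ‖T ^ k * T‖ := by rw [pow_succ]
          _ ≤ ‖T ^ k‖ * ‖T‖ := norm_mul_le _ _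
          _ ≤ (max 1 ‖T‖) ^ k * max 1 ‖T‖ :=
              mul_le_mul ih (le_max_right _ _) (norm_nonneg _) (by positivity)
          _ = (max 1 ‖T‖) ^ (k + 1) := (pow_succ _ _).symm
  have hKbound : ∀ m : ℕ, m ≤ n → ‖(T ^ m) x‖ ≤ K := by
    intro m hm
    calc ‖(T ^ m) x‖ ≤ ‖T ^ m‖ * ‖x‖ := (T ^ m).le_opNorm x
      _ ≤ (max 1 ‖T‖) ^ m * ‖x‖ :=
          mul_le_mul_of_nonneg_right (hpow m) (norm_nonneg x)
      _ ≤ (max 1 ‖T‖) ^ n * ‖x‖ :=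
          mul_le_mul_of_nonneg_right
            (pow_le_pow_right₀ (le_max_left 1 ‖T‖) hm) (norm_nonneg x)
  -- choose a large scaling factor
  obtain ⟨r, hr1, hr2⟩ : ∃ r : ℝ, d / δ < r ∧ (K + d) / ‖c‖ < r := by
    refine ⟨max (d / δ) ((K + d) / ‖c‖) + 1, ?_, ?_⟩
    · calc d / δ ≤ max (d / δ) ((K + d) / ‖c‖) := le_max_left _ _
        _ < _ := lt_add_one _
    · calc (K + d) / ‖c‖ ≤ max (d / δ) ((K + d) / ‖c‖) := le_max_right _ _
        _ < _ := lt_add_one _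
  have hrpos : 0 < r := lt_of_le_of_lt (by positivity) hr1
  have hrδ : d < r * δ := (div_lt_iff₀ hδ).1 hr1
  have hrc : K + d < r * ‖c‖ := (div_lt_iff₀ hcnorm).1 hr2
  -- the scaled point lies in C, hence near the orbit
  have hrcC : (r : ℂ) • c ∈ C := hCcone c hcC r hrpos
  obtain ⟨m, hm⟩ := hdense hrcC
  rcases lt_or_ge m n with hmn | hmn
  · -- early orbit point: too small
    have h1 : r * ‖c‖ - K ≤ ‖(T ^ m) x - (r : ℂ) • c‖ := by
      have := norm_sub_norm_le ((r : ℂ) • c) ((T ^ m) x)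
      have hnorm : ‖(r : ℂ) • c‖ = r * ‖c‖ := by
        rw [norm_smul, Complex.norm_real, Real.norm_eq_abs, abs_of_pos hrpos]
      rw [← norm_sub_rev]
      nlinarith [hKbound m hmn.le, norm_sub_norm_le ((r:ℂ) • c) ((T ^ m) x)]
    linarith
  · -- late orbit point: lies in N
    have hmem : (T ^ m) x ∈ (N : Set X) := by
      rw [hNcoe]
      apply subset_closure
      refine ⟨(T ^ (m - n)) x, ?_⟩
      rw [← ContinuousLinearMap.mul_apply, ← pow_add, Nat.add_sub_cancel' hmn]
    -- but the scaled point is far from N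
    have hfar : r * δ ≤ Metric.infDist ((r : ℂ) • c) (N : Set X) := by
      by_contra hlt
      push_neg at hlt
      obtain ⟨y, hyN, hy⟩ := (Metric.infDist_lt_iff hNne).1 hlt
      have hyN' : ((r : ℂ))⁻¹ • y ∈ (N : Set X) := N.smul_mem _ hyN
      have : dist c (((r : ℂ))⁻¹ • y) < δ := by
        have hr0 : (r : ℂ) ≠ 0 := by
          simp [Complex.ofReal_ne_zero]; exact hrpos.ne'
        have : dist ((r:ℂ) • c) y = r * dist c (((r:ℂ))⁻¹ • y) := by
          rw [dist_eq_norm, dist_eq_norm]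
          have : (r:ℂ) • c - y = (r:ℂ) • (c - ((r:ℂ))⁻¹ • y) := by
            rw [smul_sub, smul_inv_smul₀ hr0]
          rw [this, norm_smul, Complex.norm_real, Real.norm_eq_abs, abs_of_pos hrpos]
        rw [this] at hy
        exact lt_of_mul_lt_mul_left (by linarith) hrpos.le
      exact absurd (Metric.infDist_le_dist_of_mem hyN') (by rw [← hδdef]; linarith)
    have : Metric.infDist ((r : ℂ) • c) (N : Set X) ≤ ‖(T ^ m) x - (r : ℂ) • c‖ := by
      rw [norm_sub_rev, ← dist_eq_norm]
      exact Metric.infDist_le_dist_of_mem hmem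
    linarith

theorem denseRange_of_coarsely_dense_on_cone [CompleteSpace X]
    (hinf : ¬ FiniteDimensional ℂ X)
    (T : X →L[ℂ] X) (x : X) (d : ℝ) (hd : 0 < d)
    (C : Set X) (hC : IsOpenCone C) (hdense : C ⊆ coarseOrbit T x d) :
    DenseRange T ∧ ∀ n : ℕ, DenseRange (T ^ n) := by
  have h := fun n => key_denseRange T x d hd C hC hdense n
  refine ⟨?_, h⟩
  have := h 1
  rwa [pow_one] at this
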